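/- (Theorem 1) For every k ∈ ℕ⁺, there is no TGN formulation that represents the moving average of order k: no choice of S, M, M′, E, s₀, msg_s, msg_d, agg, mem, h, g satisfies, for all n, m ≥ k, all reals α₁,…,αₙ, β₁,…,β_m and all strictly increasing times t₁ < ⋯ < t_{n+m}, both z₁ = (0, ᾱ, β̄) on G and z′₁ = (0, β̄, ᾱ) on G′, where ᾱ = (1/k)·Σ_{i=n−k+1}^{n} αᵢ and β̄ = (1/k)·Σ_{i=m−k+1}^{m} βᵢ. -/

import Mathlib

/-- Events `(u, v, t, e)`: source node, destination node, time, scalar feature. -/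
abbrev Event : Type := ℕ × ℕ × ℝ × ℝ

/-- A (single-batch) TGN formulation. -/
structure TGN (S M M' E : Type*) where
  s0 : S
  msgS : S → S → ℝ → ℝ → M
  msgD : S → S → ℝ → ℝ → M
  agg : List M → M'
  memUpd : M' → S → S
  h : S → S → ℝ → E
  g : Multiset E → ℝ × ℝ × ℝ

variable {S M M' E : Type*}

/-- Time-ordered list of messages received by node `i` when the event list `L`
is processed as a single batch (all memories at the initial state `s0`). -/
def TGN.recv (T : TGN S M M' E) (i : ℕ) (L : List Event) : List M :=
  L.flatMap fun ev =>
    (if ev.1 = i then [T.msgS T.s0 T.s0 ev.2.2.1 ev.2.2.2] else []) ++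
    (if ev.2.1 = i then [T.msgD T.s0 T.s0 ev.2.2.1 ev.2.2.2] else [])

/-- Memory of node `i` after the single-batch update on event list `L`. -/
def TGN.memOf (T : TGN S M M' E) (i : ℕ) (L : List Event) : S :=
  match T.recv i L with
  | [] => T.s0
  | msg :: msgs => T.memUpd (T.agg (msg :: msgs)) T.s0

/-- Embedding of node 1: `g` applied to the multiset of pair features
`h(s₁, s_v, e)` over events `(1, v, t, e)` with source 1. -/
def TGN.emb (T : TGN S M M' E) (L : List Event) : ℝ × ℝ × ℝ :=
  T.g ↑(L.filterMap fun ev =>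
    if ev.1 = 1 then some (T.h (T.memOf 1 L) (T.memOf ev.2.1 L) ev.2.2.2) else none)

/-- Graph `G`: node 1 sends `α₁,…,αₙ` to node 2 at times `t₁ < ⋯ < tₙ`, then
sends `β₁,…,β_m` to node 3 at times `t_{n+1} < ⋯ < t_{n+m}`. -/
def graphG (n m : ℕ) (α β t : ℕ → ℝ) : List Event :=
  ((List.range n).map fun i => (1, 2, t (i + 1), α (i + 1))) ++
  ((List.range m).map fun i => (1, 3, t (n + i + 1), β (i + 1)))

/-- Graph `G'`: the flipped graph, with destinations 2 and 3 exchanged. -/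
def graphG' (n m : ℕ) (α β t : ℕ → ℝ) : List Event :=
  ((List.range n).map fun i => (1, 3, t (i + 1), α (i + 1))) ++
  ((List.range m).map fun i => (1, 2, t (n + i + 1), β (i + 1)))


theorem memOf_congr (T : TGN S M M' E) {i j : ℕ} {L L' : List Event}
    (h : T.recv i L = T.recv j L') : T.memOf i L = T.memOf j L' := by
  unfold TGN.memOf
  rw [h]

theorem filterG (T : TGN S M M' E) (n m : ℕ) (α β t : ℕ → ℝ) (x : S) (mem : ℕ → S) :
    ((graphG n m α β t).filterMap fun ev =>
        if ev.1 = 1 then some (T.h x (mem ev.2.1) ev.2.2.2) else none) =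
      ((List.range n).map fun i => T.h x (mem 2) (α (i + 1))) ++
      ((List.range m).map fun i => T.h x (mem 3) (β (i + 1))) := by
  simp [graphG, List.filterMap_append, List.filterMap_map, Function.comp_def, ← List.filterMap_eq_map, List.filterMap_filterMap, -List.filterMap_eq_map']

theorem filterG' (T : TGN S M M' E) (n m : ℕ) (α β t : ℕ → ℝ) (x : S) (mem : ℕ → S) :
    ((graphG' n m α β t).filterMap fun ev =>
        if ev.1 = 1 then some (T.h x (mem ev.2.1) ev.2.2.2) else none) =
      ((List.range n).map fun i => T.h x (mem 3) (α (i + 1))) ++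
      ((List.range m).map fun i => T.h x (mem 2) (β (i + 1))) := by
  simp [graphG', List.filterMap_append, List.filterMap_map, Function.comp_def, ← List.filterMap_eq_map, List.filterMap_filterMap, -List.filterMap_eq_map']

theorem emb_eq (T : TGN S M M' E) (n m : ℕ) (α β t : ℕ → ℝ) :
    T.emb (graphG n m α β t) = T.emb (graphG' n m α β t) := by
  have h1 : T.memOf 1 (graphG n m α β t) = T.memOf 1 (graphG' n m α β t) :=
    memOf_congr T (by simp [TGN.recv, graphG, graphG', List.flatMap_append, List.flatMap_map])
  have h2 : T.memOf 2 (graphG n m α β t) = T.memOf 3 (graphG' n m α β t) :=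
    memOf_congr T (by simp [TGN.recv, graphG, graphG', List.flatMap_append, List.flatMap_map])
  have h3 : T.memOf 3 (graphG n m α β t) = T.memOf 2 (graphG' n m α β t) :=
    memOf_congr T (by simp [TGN.recv, graphG, graphG', List.flatMap_append, List.flatMap_map])
  unfold TGN.emb
  rw [h1,
    filterG T n m α β t _ (fun v => T.memOf v (graphG n m α β t)),
    filterG' T n m α β t _ (fun v => T.memOf v (graphG' n m α β t))]
  rw [h2, h3]

/-- **Theorem 1.** For every `k ∈ ℕ⁺`, no TGN formulation
represents the moving average of order `k`. -/
theorem tgn_cannot_represent_moving_average (k : ℕ) (hk : 0 < k)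
    {S M M' E : Type*} (T : TGN S M M' E) :
    ¬ (∀ (n m : ℕ), k ≤ n → k ≤ m → ∀ (α β t : ℕ → ℝ),
        StrictMonoOn t (Set.Icc 1 (n + m)) →
        T.emb (graphG n m α β t) =
          (0, (1 / (k : ℝ)) * ∑ i ∈ Finset.Icc (n - k + 1) n, α i,
              (1 / (k : ℝ)) * ∑ i ∈ Finset.Icc (m - k + 1) m, β i) ∧
        T.emb (graphG' n m α β t) =
          (0, (1 / (k : ℝ)) * ∑ i ∈ Finset.Icc (m - k + 1) m, β i,
              (1 / (k : ℝ)) * ∑ i ∈ Finset.Icc (n - k + 1) n, α i)) := by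
  intro H
  have ht : StrictMonoOn (fun i : ℕ => (i : ℝ)) (Set.Icc 1 (k + k)) := by
    intro a _ b _ hab
    show (a : ℝ) < b
    exact_mod_cast hab
  obtain ⟨hG, hG'⟩ := H k k le_rfl le_rfl (fun _ => 0) (fun _ => 1) (fun i => (i : ℝ)) ht
  rw [emb_eq] at hG
  rw [hG] at hG'
  have hcard : (Finset.Icc (k - k + 1) k).card = k := by
    rw [Nat.card_Icc]
    omega
  have h0 : (1 / (k : ℝ)) * ∑ i ∈ Finset.Icc (k - k + 1) k, (0 : ℝ) = 0 := by simp
  have h1 : (1 / (k : ℝ)) * ∑ i ∈ Finset.Icc (k - k + 1) k, (1 : ℝ) = 1 := by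
    rw [Finset.sum_const, hcard]
    have : (k : ℝ) ≠ 0 := Nat.cast_ne_zero.mpr hk.ne'
    field_simp
    simp
  rw [h0, h1] at hG'
  have := congrArg (fun p => p.2.1) hG'
  simp at this
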